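/- Let R be a commutative ring with invertible ω^{1/2}, and let V, V_e, p, Q, Q_e be as in the cutting setup: p : V_e → V surjective with fibers of size 1 or 2, Q_e antisymmetric on V_e, and Q(u,v) := ∑_{w ∈ p⁻¹(v), w' ∈ p⁻¹(u)} Q_e(w', w) antisymmetric on V, with the additional assumption that Q_e(w', w) = 0 whenever w' ≠ w lie in the same fiber. Then the assignment S(Z_v) := ∏_{w ∈ p⁻¹(v)} Z_w (Weyl-ordered) extends to a well-defined injective R-algebra homomorphism S : T_ω(Q) → T_ω(Q_e) between the quantum tori. -/

import Mathlib

/-- The image of a unit of `R` in the units of an `R`-algebra `A`. -/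
noncomputable def unitsMap {R A : Type} [CommRing R] [Ring A] [Algebra R A] (w : Rˣ) : Aˣ :=
  Units.map (algebraMap R A).toMonoidHom w

/-- The (unordered) Laurent monomial `∏ Z_v^{t_v}` along a list of vertices. -/
def listMono {A V : Type} [Ring A] (Z : V → Aˣ) (t : V → ℤ) (l : List V) : Aˣ :=
  (l.map fun v => Z v ^ t v).prod

section GroupLemmas
variable {G : Type*} [Group G] {V : Type*}

lemma swap_base {W x y : G} {q : ℤ}
    (h : x * y = W ^ q * (y * x)) : y * x = W ^ (-q) * (x * y) := by
  rw [h, zpow_neg, inv_mul_cancel_left]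

lemma zpow_swap {W x y : G} (hW : ∀ g : G, Commute W g) {q : ℤ}
    (h : x * y = W ^ q * (y * x)) (a b : ℤ) :
    x ^ a * y ^ b = W ^ (q * a * b) * (y ^ b * x ^ a) := by
  have h1 : SemiconjBy x y (W ^ q * y) := by
    unfold SemiconjBy; rw [h, mul_assoc]
  have h2 := h1.zpow_right b
  have h3 : (W ^ q * y) ^ b = W ^ (q * b) * y ^ b := by
    rw [((hW y).zpow_left q).mul_zpow, ← zpow_mul]
  have h4 : x * y ^ b = W ^ (q * b) * (y ^ b * x) := by
    have := h2.eq
    rw [h3, mul_assoc] at this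
    exact this
  have h5 : SemiconjBy (y ^ b) x (W ^ (-(q * b)) * x) := by
    unfold SemiconjBy
    have := swap_base h4
    rw [this, mul_assoc]
  have h6 := (h5.zpow_right a).eq
  have h7 : (W ^ (-(q * b)) * x) ^ a = W ^ (-(q * b) * a) * x ^ a := by
    rw [((hW x).zpow_left _).mul_zpow, ← zpow_mul]
  rw [h7, mul_assoc] at h6
  have := swap_base h6
  rw [this]
  ring_nf

lemma move_left {W : G} (hW : ∀ g : G, Commute W g) (k : ℤ) (a b : G) :
    a * (W ^ k * b) = W ^ k * (a * b) := by
  rw [← mul_assoc, (((hW a).zpow_left k).symm).eq, mul_assoc]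

lemma merge_left {W : G} (i j : ℤ) (x : G) : W ^ i * (W ^ j * x) = W ^ (i + j) * x := by
  rw [← mul_assoc, ← zpow_add]

/-- half-exponent of the reordering of two monomials -/
def hexpo {V : Type*} (Q : V → V → ℤ) (t s : V → ℤ) : List V → ℤ
  | [] => 0
  | v :: l => s v * ((l.map fun u => t u * Q u v).sum) + hexpo Q t s l

lemma mono_swap {W : G} (hW : ∀ g : G, Commute W g) (Z : V → G) (Q : V → V → ℤ)
    (rel : ∀ v v', Z v * Z v' = W ^ (2 * Q v v') * (Z v' * Z v)) (t : V → ℤ)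
    (v : V) (b : ℤ) (l : List V) :
    (l.map fun u => Z u ^ t u).prod * Z v ^ b
      = W ^ (2 * b * (l.map fun u => t u * Q u v).sum)
        * (Z v ^ b * (l.map fun u => Z u ^ t u).prod) := by
  induction l with
  | nil => simp
  | cons u l ih =>
    simp only [List.map_cons, List.prod_cons, List.sum_cons]
    have h1 := zpow_swap hW (rel u v) (t u) b
    set P := (l.map fun u => Z u ^ t u).prod with hP
    set e1 := 2 * b * (l.map fun u => t u * Q u v).sum with he1
    trans W ^ (e1 + 2 * Q u v * t u * b) * (Z v ^ b * Z u ^ t u * P)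
    · rw [mul_assoc, ih, move_left hW, ← mul_assoc (Z u ^ t u), h1,
        mul_assoc (W ^ (2 * Q u v * t u * b)), merge_left]
    · rw [mul_assoc (Z v ^ b)]
      congr 2
      ring

lemma mono_mul {W : G} (hW : ∀ g : G, Commute W g) (Z : V → G) (Q : V → V → ℤ)
    (rel : ∀ v v', Z v * Z v' = W ^ (2 * Q v v') * (Z v' * Z v)) (t s : V → ℤ) (l : List V) :
    (l.map fun u => Z u ^ t u).prod * (l.map fun u => Z u ^ s u).prod
      = W ^ (2 * hexpo Q t s l) * (l.map fun u => Z u ^ (t u + s u)).prod := by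
  induction l with
  | nil => simp [hexpo]
  | cons v l ih =>
    simp only [List.map_cons, List.prod_cons, hexpo]
    set Pt := (l.map fun u => Z u ^ t u).prod with hPt
    set Ps := (l.map fun u => Z u ^ s u).prod with hPs
    set Pts := (l.map fun u => Z u ^ (t u + s u)).prod with hPts
    set e1 := 2 * s v * (l.map fun u => t u * Q u v).sum with he1
    have step1 : Pt * Z v ^ s v = W ^ e1 * (Z v ^ s v * Pt) := mono_swap hW Z Q rel t v (s v) l
    trans W ^ (e1 + 2 * hexpo Q t s l) * (Z v ^ (t v + s v) * Pts)
    · calc Z v ^ t v * Pt * (Z v ^ s v * Ps)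
          = Z v ^ t v * (Pt * Z v ^ s v) * Ps := by simp only [mul_assoc]
        _ = Z v ^ t v * (W ^ e1 * (Z v ^ s v * Pt)) * Ps := by rw [step1]
        _ = W ^ e1 * (Z v ^ t v * (Z v ^ s v * Pt) * Ps) := by
            rw [move_left hW, mul_assoc (W ^ e1)]
        _ = W ^ e1 * (Z v ^ (t v + s v) * (Pt * Ps)) := by
            rw [zpow_add]; simp only [mul_assoc]
        _ = W ^ e1 * (Z v ^ (t v + s v) * (W ^ (2 * hexpo Q t s l) * Pts)) := by rw [ih]
        _ = W ^ (e1 + 2 * hexpo Q t s l) * (Z v ^ (t v + s v) * Pts) := by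
            rw [move_left hW, merge_left]
    · congr 2
      ring

lemma mono_zero (Z : V → G) (t : V → ℤ) (l : List V) (h : ∀ u ∈ l, t u = 0) :
    (l.map fun u => Z u ^ t u).prod = 1 := by
  induction l with
  | nil => rfl
  | cons v l ih =>
    simp only [List.map_cons, List.prod_cons]
    rw [h v (List.mem_cons_self), ih fun u hu => h u (List.mem_cons_of_mem v hu)]
    simp

lemma mono_single [DecidableEq V] (Z : V → G) (v : V) (l : List V)
    (hmem : v ∈ l) (hnd : l.Nodup) :
    (l.map fun u => Z u ^ ((Pi.single v (1 : ℤ) : V → ℤ) u)).prod = Z v := by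
  induction l with
  | nil => simp at hmem
  | cons u l ih =>
    simp only [List.map_cons, List.prod_cons]
    rcases eq_or_ne u v with rfl | hne
    · have hvl : u ∉ l := (List.nodup_cons.mp hnd).1
      rw [mono_zero Z _ l fun u' hu' => Pi.single_eq_of_ne (M := fun _ => ℤ)
        (fun (h : u' = u) => hvl (by rwa [h] at hu')) 1]
      simp
    · have hvl : v ∈ l := by
        rcases List.mem_cons.mp hmem with h | h
        · exact absurd h.symm hne
        · exact h
      rw [Pi.single_eq_of_ne (M := fun _ => ℤ) hne, ih hvl (List.nodup_cons.mp hnd).2]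
      simp

lemma mono_indicator (Z : V → G) (P : V → Prop) [DecidablePred P] (t : V → ℤ)
    (ht : ∀ u, t u = if P u then 1 else 0) (l : List V) :
    (l.map fun u => Z u ^ t u).prod = ((l.filter fun u => decide (P u)).map Z).prod := by
  induction l with
  | nil => rfl
  | cons u l ih =>
    simp only [List.map_cons, List.prod_cons, List.filter_cons]
    rcases Classical.em (P u) with h | h
    · simp [h, ht u, ih]
    · simp [h, ht u, ih]

end GroupLemmas

section ArithLemmas
variable {V : Type*}

lemma hswap (Q : V → V → ℤ) (hanti : ∀ u v, Q u v = - Q v u) (s : V → ℤ) (v : V) :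
    ∀ l : List V, (l.map fun u => s u * Q u v).sum = -((l.map fun u => s u * Q v u).sum) := by
  intro l
  induction l with
  | nil => simp
  | cons u l ih => simp only [List.map_cons, List.sum_cons, ih, hanti u v]; ring

lemma hexpo_sub (Q : V → V → ℤ) (hanti : ∀ u v, Q u v = - Q v u) (t s : V → ℤ) (l : List V) :
    hexpo Q t s l - hexpo Q s t l
      = (l.map fun u => t u * (l.map fun v' => s v' * Q u v').sum).sum := by
  induction l with
  | nil => simp [hexpo]
  | cons v l ih =>
    simp only [hexpo, List.map_cons, List.sum_cons]
    have hQvv : Q v v = 0 := by have := hanti v v; omega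
    have expand : (l.map fun u => t u * (s v * Q u v + (l.map fun v' => s v' * Q u v').sum)).sum
        = (l.map fun u => s v * (t u * Q u v)).sum
          + (l.map fun u => t u * (l.map fun v' => s v' * Q u v').sum).sum := by
      rw [← List.sum_map_add]
      congr 1
      apply List.map_congr_left
      intro u _
      ring
    rw [hswap Q hanti s v l, hQvv, expand, List.sum_map_mul_left, ← ih]
    ring

lemma hexpo_add_left (Q : V → V → ℤ) (t t' s : V → ℤ) (l : List V) :
    hexpo Q (fun u => t u + t' u) s l = hexpo Q t s l + hexpo Q t' s l := by
  induction l with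
  | nil => simp [hexpo]
  | cons v l ih =>
    simp only [hexpo, ih]
    have : (l.map fun u => (t u + t' u) * Q u v).sum
        = (l.map fun u => t u * Q u v).sum + (l.map fun u => t' u * Q u v).sum := by
      rw [← List.sum_map_add]
      congr 1
      apply List.map_congr_left
      intro u _
      ring
    rw [this]
    ring

lemma hexpo_add_right (Q : V → V → ℤ) (t s s' : V → ℤ) (l : List V) :
    hexpo Q t (fun u => s u + s' u) l = hexpo Q t s l + hexpo Q t s' l := by
  induction l with
  | nil => simp [hexpo]
  | cons v l ih =>
    simp only [hexpo, ih]
    ring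

lemma hexpo_diag_zero (Q : V → V → ℤ) (t : V → ℤ)
    (h : ∀ u u', t u ≠ 0 → t u' ≠ 0 → Q u u' = 0) (l : List V) :
    hexpo Q t t l = 0 := by
  induction l with
  | nil => rfl
  | cons v l ih =>
    simp only [hexpo, ih, add_zero]
    rcases eq_or_ne (t v) 0 with h0 | h0
    · simp [h0]
    · have hz : ∀ x ∈ l.map fun u => t u * Q u v, x = 0 := by
        intro x hx
        simp only [List.mem_map] at hx
        obtain ⟨u, _, rfl⟩ := hx
        rcases eq_or_ne (t u) 0 with h1 | h1
        · simp [h1]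
        · rw [h u v h1 h0, mul_zero]
      rw [List.sum_eq_zero hz, mul_zero]
end ArithLemmas

section SortLemmas
variable {α : Type*} {M : Type*} [AddCommMonoid M]

lemma sort_map_sum [LinearOrder α] (s : Finset α) (f : α → M) :
    ((s.sort (· ≤ ·)).map f).sum = ∑ x ∈ s, f x := by
  have hperm := (Finset.sort_perm_toList s (· ≤ ·)).map f
  rw [hperm.sum_eq, Finset.sum_map_toList]

lemma sort_filter' [LinearOrder α] (P : α → Prop) [DecidablePred P] (s : Finset α) :
    (s.sort (· ≤ ·)).filter (fun a => decide (P a)) = (s.filter P).sort (· ≤ ·) := by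
  refine (fun h1 h2 h3 => List.Perm.eq_of_pairwise' (r := (· ≤ · : α → α → Prop)) h2 h3 h1) ?_ ?_ ?_
  · rw [← Multiset.coe_eq_coe]
    rw [← Multiset.filter_coe, Finset.sort_eq, Finset.sort_eq, ← Finset.filter_val]
  · exact (Finset.pairwise_sort _ _).filter _
  · exact Finset.pairwise_sort _ _
end SortLemmas

lemma fiber_double_sum {V Ve : Type} [Fintype V] [Fintype Ve] [DecidableEq V]
    (p : Ve → V) (Qe : Ve → Ve → ℤ) (Q : V → V → ℤ)
    (hQ : ∀ u v, Q u v = ∑ x ∈ Finset.univ.filter (fun x => p x = u),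
        ∑ y ∈ Finset.univ.filter (fun y => p y = v), Qe x y)
    (t s : V → ℤ) :
    (∑ x : Ve, t (p x) * ∑ y : Ve, s (p y) * Qe x y)
      = ∑ u : V, t u * ∑ v : V, s v * Q u v := by
  have inner : ∀ x : Ve, (∑ y : Ve, s (p y) * Qe x y)
      = ∑ v : V, s v * ∑ y ∈ Finset.univ.filter (fun y => p y = v), Qe x y := by
    intro x
    rw [← Finset.sum_fiberwise Finset.univ p (fun y => s (p y) * Qe x y)]
    refine Finset.sum_congr rfl fun v _ => ?_
    rw [Finset.mul_sum]
    refine Finset.sum_congr rfl fun y hy => ?_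
    rw [(Finset.mem_filter.mp hy).2]
  rw [← Finset.sum_fiberwise Finset.univ p
    (fun x => t (p x) * ∑ y : Ve, s (p y) * Qe x y)]
  refine Finset.sum_congr rfl fun u _ => ?_
  have step1 : ∑ x ∈ Finset.univ.filter (fun x => p x = u),
      t (p x) * ∑ y : Ve, s (p y) * Qe x y
      = ∑ x ∈ Finset.univ.filter (fun x => p x = u),
        t u * ∑ v : V, s v * ∑ y ∈ Finset.univ.filter (fun y => p y = v), Qe x y := by
    refine Finset.sum_congr rfl fun x hx => ?_
    rw [(Finset.mem_filter.mp hx).2, inner x]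
  rw [step1, ← Finset.mul_sum]
  congr 1
  rw [Finset.sum_comm]
  refine Finset.sum_congr rfl fun v _ => ?_
  rw [← Finset.mul_sum, hQ u v]

section Bridge
variable {R A : Type} [CommRing R] [Ring A] [Algebra R A] {V : Type}

lemma unitsMap_central (w : Rˣ) : ∀ g : Aˣ, Commute (unitsMap (A := A) w) g := by
  intro g
  apply Units.ext
  simp only [Units.val_mul]
  show (algebraMap R A (w : R)) * (g : A) = (g : A) * (algebraMap R A (w : R))
  exact Algebra.commutes _ _

lemma unitsMap_zpow_val (w : Rˣ) (k : ℤ) :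
    ((unitsMap (A := A) w ^ k : Aˣ) : A) = algebraMap R A ((w ^ k : Rˣ) : R) := by
  rw [show unitsMap (A := A) w ^ k
      = Units.map (algebraMap R A).toMonoidHom (w ^ k) from
    (map_zpow (Units.map (algebraMap R A).toMonoidHom) w k).symm]
  rfl

variable [Fintype V] [LinearOrder V]

lemma listMono_mul_val (w : Rˣ) (Q : V → V → ℤ) (Z : V → Aˣ)
    (rel : ∀ v v', Z v * Z v' = unitsMap (A := A) w ^ (2 * Q v v') * (Z v' * Z v))
    (t s : V → ℤ) :
    ((listMono Z t (Finset.univ.sort (· ≤ ·)) : Aˣ) : A)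
        * ((listMono Z s (Finset.univ.sort (· ≤ ·)) : Aˣ) : A)
      = ((w ^ (2 * hexpo Q t s (Finset.univ.sort (· ≤ ·))) : Rˣ) : R)
        • ((listMono Z (fun u => t u + s u) (Finset.univ.sort (· ≤ ·)) : Aˣ) : A) := by
  have h := mono_mul (unitsMap_central w) Z Q rel t s (Finset.univ.sort (· ≤ ·))
  have h2 := congrArg Units.val h
  simp only [Units.val_mul] at h2
  rw [unitsMap_zpow_val] at h2
  rw [Algebra.smul_def]
  exact h2

lemma listMono_single_val (Z : V → Aˣ) (v : V) :
    ((listMono Z ((Pi.single v (1 : ℤ) : V → ℤ)) (Finset.univ.sort (· ≤ ·)) : Aˣ) : A)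
      = ((Z v : Aˣ) : A) := by
  congr 1
  exact mono_single Z v _ ((Finset.mem_sort _).mpr (Finset.mem_univ v)) (Finset.sort_nodup _ _)

lemma listMono_zero_val (Z : V → Aˣ) (t : V → ℤ) (h : ∀ u, t u = 0) (l : List V) :
    ((listMono Z t l : Aˣ) : A) = 1 := by
  have : listMono Z t l = 1 := mono_zero Z t l fun u _ => h u
  rw [this, Units.val_one]

end Bridge


section CeLemmas
variable {V Ve : Type} [Fintype V] [LinearOrder V] [Fintype Ve] [LinearOrder Ve]

/-- The exponent correction for the splitting map. -/
def ceD (p : Ve → V) (Qe : Ve → Ve → ℤ) (Q : V → V → ℤ) (t : V → ℤ) : ℤ :=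
  hexpo Qe (fun x => t (p x)) (fun x => t (p x)) (Finset.univ.sort (· ≤ ·))
    - hexpo Q t t (Finset.univ.sort (· ≤ ·))

lemma ceD_key (p : Ve → V)
    (Qe : Ve → Ve → ℤ) (hQe : ∀ x y, Qe x y = - Qe y x)
    (Q : V → V → ℤ) (hQanti : ∀ u v, Q u v = - Q v u)
    (hQ : ∀ u v, Q u v = ∑ x ∈ Finset.univ.filter (fun x => p x = u),
        ∑ y ∈ Finset.univ.filter (fun y => p y = v), Qe x y)
    (t s : V → ℤ) :
    2 * hexpo Q t s (Finset.univ.sort (· ≤ ·)) + ceD p Qe Q (fun u => t u + s u)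
      = ceD p Qe Q t + ceD p Qe Q s
        + 2 * hexpo Qe (fun x => t (p x)) (fun x => s (p x)) (Finset.univ.sort (· ≤ ·)) := by
  simp only [ceD]
  rw [hexpo_add_left Qe, hexpo_add_right Qe, hexpo_add_right Qe,
    hexpo_add_left Q, hexpo_add_right Q, hexpo_add_right Q]
  have hsymV := hexpo_sub Q hQanti t s (Finset.univ.sort (· ≤ ·))
  have hsymE := hexpo_sub Qe hQe (fun x => t (p x)) (fun x => s (p x)) (Finset.univ.sort (· ≤ ·))
  have hv : ((Finset.univ.sort (· ≤ ·)).map fun u =>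
        t u * (((Finset.univ.sort (· ≤ ·)).map fun v' => s v' * Q u v').sum)).sum
      = ∑ u : V, t u * ∑ v : V, s v * Q u v := by
    have hinner : ∀ u : V, (((Finset.univ.sort (· ≤ ·)).map fun v' => s v' * Q u v').sum)
        = ∑ v : V, s v * Q u v := fun u => sort_map_sum _ _
    calc ((Finset.univ.sort (· ≤ ·)).map fun u =>
            t u * (((Finset.univ.sort (· ≤ ·)).map fun v' => s v' * Q u v').sum)).sum
        = ((Finset.univ.sort (· ≤ ·)).map fun u => t u * ∑ v : V, s v * Q u v).sum := by
          congr 1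
          apply List.map_congr_left
          intro u _
          rw [hinner u]
      _ = ∑ u : V, t u * ∑ v : V, s v * Q u v := sort_map_sum _ _
  have he : ((Finset.univ.sort (· ≤ ·)).map fun x =>
        t (p x) * (((Finset.univ.sort (· ≤ ·)).map fun y => s (p y) * Qe x y).sum)).sum
      = ∑ x : Ve, t (p x) * ∑ y : Ve, s (p y) * Qe x y := by
    have hinner : ∀ x : Ve, (((Finset.univ.sort (· ≤ ·)).map fun y => s (p y) * Qe x y).sum)
        = ∑ y : Ve, s (p y) * Qe x y := fun x => sort_map_sum _ _
    calc ((Finset.univ.sort (· ≤ ·)).map fun x =>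
            t (p x) * (((Finset.univ.sort (· ≤ ·)).map fun y => s (p y) * Qe x y).sum)).sum
        = ((Finset.univ.sort (· ≤ ·)).map fun x => t (p x) * ∑ y : Ve, s (p y) * Qe x y).sum := by
          congr 1
          apply List.map_congr_left
          intro x _
          rw [hinner x]
      _ = ∑ x : Ve, t (p x) * ∑ y : Ve, s (p y) * Qe x y := sort_map_sum _ _
  have hfib := fiber_double_sum p Qe Q hQ t s
  have hkey2 : hexpo Qe (fun x => t (p x)) (fun x => s (p x)) (Finset.univ.sort (· ≤ ·))
        - hexpo Qe (fun x => s (p x)) (fun x => t (p x)) (Finset.univ.sort (· ≤ ·))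
      = hexpo Q t s (Finset.univ.sort (· ≤ ·)) - hexpo Q s t (Finset.univ.sort (· ≤ ·)) := by
    rw [hsymE, hsymV, he, hv, hfib]
  linarith [hkey2]

end CeLemmas


/-- `A`, with distinguished units `Z_v`, is the quantum torus
`T_ω(Q) = R⟨Z_v^{±1}⟩/(Z_v Z_w = ω^{2Q(v,w)} Z_w Z_v)`: the relations hold, and the
monomials `Z^t`, `t ∈ ℤ^V`, form an `R`-basis of `A`. -/
structure IsQuantumTorus (R : Type) [CommRing R] {V : Type} [Fintype V] [LinearOrder V]
    (A : Type) [Ring A] [Algebra R A] (w : Rˣ) (Q : V → V → ℤ) (Z : V → Aˣ) : Prop where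
  rel : ∀ v v', Z v * Z v' = unitsMap (A := A) w ^ (2 * Q v v') * (Z v' * Z v)
  free : Function.Bijective fun c : (V → ℤ) →₀ R =>
    c.sum fun t r => r • ((listMono Z t (Finset.univ.sort (· ≤ ·)) : Aˣ) : A)

/-- The splitting homomorphism: in the cutting setup (`p : V_e → V` surjective with
fibers of size 1 or 2, `Q_e` antisymmetric on `V_e` vanishing between distinct elements
of the same fiber, `Q(u,v) = ∑_{w' ∈ p⁻¹(u), w ∈ p⁻¹(v)} Q_e(w',w)`), the assignment
`S(Z_v) = ∏_{w ∈ p⁻¹(v)} Z_w` extends to a well-defined injective `R`-algebra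
homomorphism `S : T_ω(Q) → T_ω(Q_e)`. -/
theorem stmt12 {R : Type} [CommRing R] (w σ : Rˣ) (hσ : σ * σ = w)
    {V Ve : Type} [Fintype V] [LinearOrder V] [Fintype Ve] [LinearOrder Ve]
    (p : Ve → V) (hp : Function.Surjective p)
    (hfib : ∀ v, (Finset.univ.filter fun x => p x = v).card ≤ 2)
    (Qe : Ve → Ve → ℤ) (hQe : ∀ x y, Qe x y = - Qe y x)
    (hQe0 : ∀ x y, x ≠ y → p x = p y → Qe x y = 0)
    (Q : V → V → ℤ) (hQanti : ∀ u v, Q u v = - Q v u)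
    (hQ : ∀ u v, Q u v = ∑ x ∈ Finset.univ.filter (fun x => p x = u),
        ∑ y ∈ Finset.univ.filter (fun y => p y = v), Qe x y)
    (A Ae : Type) [Ring A] [Algebra R A] [Ring Ae] [Algebra R Ae]
    (Z : V → Aˣ) (Ze : Ve → Aeˣ)
    (hT : IsQuantumTorus R A w Q Z) (hTe : IsQuantumTorus R Ae w Qe Ze) :
    ∃ S : A →ₐ[R] Ae, Function.Injective S ∧
      ∀ v, S ((Z v : A)) =
        (((Finset.univ.filter fun x => p x = v).sort (· ≤ ·)).map
          fun x => ((Ze x : Ae))).prod := by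
  have hFA : Function.Bijective ⇑(Finsupp.linearCombination R
      (fun t : V → ℤ => ((listMono Z t (Finset.univ.sort (· ≤ ·)) : Aˣ) : A))) := by
    have hfun : ⇑(Finsupp.linearCombination R
        (fun t : V → ℤ => ((listMono Z t (Finset.univ.sort (· ≤ ·)) : Aˣ) : A)))
        = fun c : (V → ℤ) →₀ R =>
          c.sum fun t r => r • ((listMono Z t (Finset.univ.sort (· ≤ ·)) : Aˣ) : A) := by
      funext c
      exact Finsupp.linearCombination_apply _ _
    rw [hfun]
    exact hT.free
  have hFE : Function.Bijective ⇑(Finsupp.linearCombination R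
      (fun τ : Ve → ℤ => ((listMono Ze τ (Finset.univ.sort (· ≤ ·)) : Aeˣ) : Ae))) := by
    have hfun : ⇑(Finsupp.linearCombination R
        (fun τ : Ve → ℤ => ((listMono Ze τ (Finset.univ.sort (· ≤ ·)) : Aeˣ) : Ae)))
        = fun c : (Ve → ℤ) →₀ R =>
          c.sum fun t r => r • ((listMono Ze t (Finset.univ.sort (· ≤ ·)) : Aeˣ) : Ae) := by
      funext c
      exact Finsupp.linearCombination_apply _ _
    rw [hfun]
    exact hTe.free
  set eA := LinearEquiv.ofBijective _ hFA with heAdef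
  set S0 : A →ₗ[R] Ae := (Finsupp.linearCombination R (fun t : V → ℤ =>
      ((w ^ (ceD p Qe Q t) : Rˣ) : R)
        • ((listMono Ze (fun x => t (p x)) (Finset.univ.sort (· ≤ ·)) : Aeˣ) : Ae))).comp
    eA.symm.toLinearMap with hS0def
  have heAsingle : ∀ (t : V → ℤ) (r : R),
      eA (Finsupp.single t r) = r • ((listMono Z t (Finset.univ.sort (· ≤ ·)) : Aˣ) : A) := by
    intro t r
    rw [heAdef, LinearEquiv.ofBijective_apply, Finsupp.linearCombination_single]
  have hS0M : ∀ t : V → ℤ,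
      S0 (((listMono Z t (Finset.univ.sort (· ≤ ·)) : Aˣ) : A))
        = ((w ^ (ceD p Qe Q t) : Rˣ) : R)
          • ((listMono Ze (fun x => t (p x)) (Finset.univ.sort (· ≤ ·)) : Aeˣ) : Ae) := by
    intro t
    have h1 : eA.symm (((listMono Z t (Finset.univ.sort (· ≤ ·)) : Aˣ) : A))
        = Finsupp.single t 1 := by
      rw [LinearEquiv.symm_apply_eq, heAsingle t 1, one_smul]
    rw [hS0def]
    simp only [LinearMap.coe_comp, Function.comp_apply, LinearEquiv.coe_coe,
      LinearEquiv.coe_toLinearMap]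
    rw [h1, Finsupp.linearCombination_single, one_smul]
  have hsc : ∀ a b : ℤ, ((w ^ a : Rˣ) : R) * ((w ^ b : Rˣ) : R) = ((w ^ (a + b) : Rˣ) : R) := by
    intro a b
    rw [← Units.val_mul, ← zpow_add]
  have key : ∀ t s : V → ℤ,
      S0 ((((listMono Z t (Finset.univ.sort (· ≤ ·)) : Aˣ) : A))
          * (((listMono Z s (Finset.univ.sort (· ≤ ·)) : Aˣ) : A)))
        = S0 (((listMono Z t (Finset.univ.sort (· ≤ ·)) : Aˣ) : A))
          * S0 (((listMono Z s (Finset.univ.sort (· ≤ ·)) : Aˣ) : A)) := by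
    intro t s
    rw [listMono_mul_val w Q Z hT.rel t s, map_smul, hS0M, hS0M, hS0M,
      smul_mul_assoc, mul_smul_comm, listMono_mul_val w Qe Ze hTe.rel
        (fun x => t (p x)) (fun x => s (p x)),
      smul_smul, smul_smul, smul_smul, hsc, hsc, hsc]
    have hexp := ceD_key p Qe hQe Q hQanti hQ t s
    rw [hexp]
  have hone : S0 1 = 1 := by
    have h0 : ((listMono Z (fun _ : V => (0 : ℤ)) (Finset.univ.sort (· ≤ ·)) : Aˣ) : A) = 1 :=
      listMono_zero_val Z _ (fun u => rfl) _
    rw [← h0, hS0M]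
    have h1 : ((listMono Ze (fun _ : Ve => (0 : ℤ)) (Finset.univ.sort (· ≤ ·)) : Aeˣ) : Ae) = 1 :=
      listMono_zero_val Ze _ (fun u => rfl) _
    rw [h1]
    have h2 : ceD p Qe Q (fun _ : V => (0 : ℤ)) = 0 := by
      simp only [ceD]
      rw [hexpo_diag_zero Qe _ (fun u u' h _ => absurd rfl h),
        hexpo_diag_zero Q _ (fun u u' h _ => absurd rfl h)]
      ring
    rw [h2]
    simp
  have h1mul : ∀ (t : V → ℤ) (y : A),
      S0 ((((listMono Z t (Finset.univ.sort (· ≤ ·)) : Aˣ) : A)) * y)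
        = S0 (((listMono Z t (Finset.univ.sort (· ≤ ·)) : Aˣ) : A)) * S0 y := by
    intro t y
    obtain ⟨c, rfl⟩ : ∃ c, eA c = y := ⟨eA.symm y, eA.apply_symm_apply y⟩
    induction c using Finsupp.induction_linear with
    | zero => simp
    | add f g hf hg => rw [map_add, mul_add, map_add, hf, hg, map_add, mul_add]
    | single a b =>
      rw [heAsingle a b, mul_smul_comm, map_smul, map_smul, key t a, mul_smul_comm]
  have hmul : ∀ x y : A, S0 (x * y) = S0 x * S0 y := by
    intro x y
    obtain ⟨c, rfl⟩ : ∃ c, eA c = x := ⟨eA.symm x, eA.apply_symm_apply x⟩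
    induction c using Finsupp.induction_linear with
    | zero => simp
    | add f g hf hg => rw [map_add, add_mul, map_add, hf, hg, map_add, add_mul]
    | single a b =>
      rw [heAsingle a b, smul_mul_assoc, map_smul, map_smul, h1mul a y, smul_mul_assoc]
  refine ⟨AlgHom.ofLinearMap S0 hone hmul, ?_, ?_⟩
  · show Function.Injective ⇑S0
    rw [hS0def]
    rw [LinearMap.coe_comp]
    apply Function.Injective.comp
    · have hτ : Function.Injective (fun (t : V → ℤ) => (fun x => t (p x) : Ve → ℤ)) := by
        intro t s h
        funext v
        obtain ⟨x, rfl⟩ := hp v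
        exact congrFun h x
      have hindE : LinearIndependent R
          (fun τ : Ve → ℤ => ((listMono Ze τ (Finset.univ.sort (· ≤ ·)) : Aeˣ) : Ae)) :=
        hFE.injective
      have hcomp := hindE.comp (fun (t : V → ℤ) => (fun x => t (p x) : Ve → ℤ)) hτ
      have hsm := hcomp.units_smul (fun t => w ^ (ceD p Qe Q t))
      have hgeq : (fun t : V → ℤ => ((w ^ (ceD p Qe Q t) : Rˣ) : R)
            • ((listMono Ze (fun x => t (p x)) (Finset.univ.sort (· ≤ ·)) : Aeˣ) : Ae))
          = (fun t => w ^ (ceD p Qe Q t))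
            • ((fun τ : Ve → ℤ => ((listMono Ze τ (Finset.univ.sort (· ≤ ·)) : Aeˣ) : Ae))
              ∘ (fun (t : V → ℤ) => (fun x => t (p x) : Ve → ℤ))) := by
        funext t
        simp [Units.smul_def, Pi.smul_apply', Function.comp]
      have : LinearIndependent R (fun t : V → ℤ => ((w ^ (ceD p Qe Q t) : Rˣ) : R)
          • ((listMono Ze (fun x => t (p x)) (Finset.univ.sort (· ≤ ·)) : Aeˣ) : Ae)) := by
        rw [hgeq]
        exact hsm
      exact this
    · exact eA.symm.injective
  · intro v
    show S0 ((Z v : A)) = _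
    rw [← listMono_single_val Z v, hS0M]
    have hce0 : ceD p Qe Q (Pi.single v (1 : ℤ) : V → ℤ) = 0 := by
      have hQdiag : ∀ u u', (Pi.single v (1 : ℤ) : V → ℤ) u ≠ 0
          → (Pi.single v (1 : ℤ) : V → ℤ) u' ≠ 0 → Q u u' = 0 := by
        intro u u' h h'
        have hu : u = v := by
          by_contra hne
          exact h (Pi.single_eq_of_ne (M := fun _ => ℤ) hne 1)
        have hu' : u' = v := by
          by_contra hne
          exact h' (Pi.single_eq_of_ne (M := fun _ => ℤ) hne 1)
        rw [hu, hu']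
        have := hQanti v v
        omega
      have hQediag : ∀ x y, (Pi.single v (1 : ℤ) : V → ℤ) (p x) ≠ 0
          → (Pi.single v (1 : ℤ) : V → ℤ) (p y) ≠ 0 → Qe x y = 0 := by
        intro x y h h'
        have hx : p x = v := by
          by_contra hne
          exact h (Pi.single_eq_of_ne (M := fun _ => ℤ) hne 1)
        have hy : p y = v := by
          by_contra hne
          exact h' (Pi.single_eq_of_ne (M := fun _ => ℤ) hne 1)
        rcases eq_or_ne x y with rfl | hne
        · have := hQe x x
          omega
        · exact hQe0 x y hne (hx.trans hy.symm)
      simp only [ceD]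
      rw [hexpo_diag_zero Qe _ hQediag, hexpo_diag_zero Q _ hQdiag]
      ring
    rw [hce0]
    simp only [zpow_zero, Units.val_one, one_smul]
    have hind := mono_indicator Ze (fun x => p x = v)
      (fun x => (Pi.single v (1 : ℤ) : V → ℤ) (p x))
      (fun x => by simp [Pi.single_apply]) (Finset.univ.sort (· ≤ ·))
    have hval := congrArg Units.val hind
    rw [sort_filter' (fun x => p x = v) Finset.univ] at hval
    have hcoe : ∀ l : List Ve, (((l.map Ze).prod : Aeˣ) : Ae)
        = (l.map fun x => ((Ze x : Ae))).prod := by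
      intro l
      simpa [List.map_map, Function.comp_def, Units.coeHom_apply] using map_list_prod (Units.coeHom Ae) (l.map Ze)
    rw [hcoe] at hval
    exact hval
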